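/- If √f = [a₀; overline(a₁, …, aₙ, 2a₀)] and X, Y are positive integers satisfying X² − f·Y² = ±1, then (X, Y) = (A_{k(n+1)−1}, B_{k(n+1)−1}) for some positive integer k, where Aᵢ/Bᵢ are the convergents of √f. -/

import Mathlib

/-- The pair `(rₖ, sₖ)` of the continued fraction algorithm for `√f`:
`r₀ = 0`, `s₀ = 1`, `r_{k+1} = aₖ sₖ − rₖ`, `s_{k+1} = (f − r_{k+1}²)/sₖ`,
where `aₖ = ⌊(√f + rₖ)/sₖ⌋ = ⌊(⌊√f⌋ + rₖ)/sₖ⌋`. -/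
def cfRS (f : ℕ) : ℕ → ℤ × ℤ
  | 0 => (0, 1)
  | k + 1 =>
    let p := cfRS f k
    let a := Int.fdiv ((Nat.sqrt f : ℤ) + p.1) p.2
    let r' := a * p.2 - p.1
    (r', Int.fdiv ((f : ℤ) - r' ^ 2) p.2)

/-- The `k`-th partial quotient `aₖ` of the continued fraction of `√f`. -/
def cfA (f : ℕ) (k : ℕ) : ℤ :=
  Int.fdiv ((Nat.sqrt f : ℤ) + (cfRS f k).1) (cfRS f k).2

/-- Numerators of the convergents of `√f`, shifted by 2:
`cfNum f (k+2) = Aₖ`, with `A₋₂ = 0`, `A₋₁ = 1`. -/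
def cfNum (f : ℕ) : ℕ → ℤ
  | 0 => 0
  | 1 => 1
  | k + 2 => cfA f k * cfNum f (k + 1) + cfNum f k

/-- Denominators of the convergents of `√f`, shifted by 2:
`cfDen f (k+2) = Bₖ`, with `B₋₂ = 1`, `B₋₁ = 0`. -/
def cfDen (f : ℕ) : ℕ → ℤ
  | 0 => 1
  | 1 => 0
  | k + 2 => cfA f k * cfDen f (k + 1) + cfDen f k

/-- `p` is a period of the (eventually periodic) partial quotient sequence of `√f`. -/
def CFIsPeriod (f p : ℕ) : Prop :=
  0 < p ∧ ∀ k, 1 ≤ k → cfA f (k + p) = cfA f k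

/-- `p` is the (minimal) period of the continued fraction expansion of `√f`. -/
def CFPeriod (f p : ℕ) : Prop :=
  CFIsPeriod f p ∧ ∀ q, CFIsPeriod f q → p ≤ q

/-- `(c, h)` is the fundamental (smallest positive) solution of `c² − f h² = 1`. -/
def IsFundamentalPell (f : ℕ) (c h : ℤ) : Prop :=
  0 < c ∧ 0 < h ∧ c ^ 2 - (f : ℤ) * h ^ 2 = 1 ∧
    ∀ c' h' : ℤ, 0 < c' → 0 < h' → c' ^ 2 - (f : ℤ) * h' ^ 2 = 1 → c ≤ c'

set_option maxHeartbeats 1000000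

namespace Stmt18

noncomputable def sq (f : ℕ) : ℝ := Real.sqrt f

abbrev rr (f k : ℕ) : ℤ := (cfRS f k).1
abbrev ss (f k : ℕ) : ℤ := (cfRS f k).2

theorem rr_zero (f : ℕ) : rr f 0 = 0 := rfl
theorem ss_zero (f : ℕ) : ss f 0 = 1 := rfl
theorem rr_succ (f k : ℕ) : rr f (k+1) = cfA f k * ss f k - rr f k := rfl
theorem ss_succ (f k : ℕ) : ss f (k+1) = Int.fdiv ((f:ℤ) - (rr f (k+1))^2) (ss f k) := rfl

section
variable {f : ℕ} (hns : ¬ IsSquare f)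

include hns

theorem f_two : 2 ≤ f := by
  rcases Nat.lt_or_ge f 2 with h | h
  · interval_cases f
    · exact absurd ⟨0, rfl⟩ hns
    · exact absurd ⟨1, rfl⟩ hns
  · exact h

omit hns
theorem sq_sq (f : ℕ) : sq f ^ 2 = f := Real.sq_sqrt (by positivity)
theorem sq_nonneg' (f : ℕ) : 0 ≤ sq f := Real.sqrt_nonneg _
include hns

theorem sq_irr : Irrational (sq f) := irrational_sqrt_natCast_iff.2 hns

theorem sq_one_lt : 1 < sq f := by
  have h2 := f_two hns
  have : (1:ℝ) < f := by exact_mod_cast Nat.lt_of_lt_of_le one_lt_two h2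
  nlinarith [sq_sq f, sq_nonneg' f]

theorem na_sq_lt : ((Nat.sqrt f : ℤ))^2 < (f:ℤ) := by
  have h1 : Nat.sqrt f ^ 2 ≤ f := Nat.sqrt_le' f
  have h2 : Nat.sqrt f ^ 2 ≠ f := by
    intro h; rw [pow_two] at h; exact hns ⟨Nat.sqrt f, h.symm⟩
  have := lt_of_le_of_ne h1 h2
  exact_mod_cast this

theorem lt_na_sq : (f:ℤ) < ((Nat.sqrt f : ℤ) + 1)^2 := by
  have h : f < (Nat.sqrt f + 1)^2 := Nat.lt_succ_sqrt' f
  exact_mod_cast h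

theorem na_pos : 1 ≤ Nat.sqrt f := by
  have h2 := f_two hns
  have h3 : f < (Nat.sqrt f + 1)^2 := Nat.lt_succ_sqrt' f
  by_contra h
  push_neg at h
  have h0 : Nat.sqrt f = 0 := by omega
  rw [h0] at h3
  norm_num at h3
  omega

theorem na_lt_sq : ((Nat.sqrt f : ℝ)) < sq f := by
  have h := na_sq_lt hns
  have h' : ((Nat.sqrt f : ℝ))^2 < (f:ℝ) := by exact_mod_cast h
  nlinarith [sq_sq f, sq_nonneg' f, Nat.cast_nonneg (α := ℝ) (Nat.sqrt f)]

theorem sq_lt_na : sq f < (Nat.sqrt f : ℝ) + 1 := by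
  have h := lt_na_sq hns
  have h' : (f:ℝ) < ((Nat.sqrt f : ℝ) + 1)^2 := by exact_mod_cast h
  nlinarith [sq_sq f, sq_nonneg' f, Nat.cast_nonneg (α := ℝ) (Nat.sqrt f)]

theorem floor_sq : ⌊sq f⌋ = (Nat.sqrt f : ℤ) := by
  rw [Int.floor_eq_iff]
  constructor
  · push_cast; exact le_of_lt (na_lt_sq hns)
  · push_cast; exact sq_lt_na hns

/-- bridge between `Int.fdiv` in the algorithm and real floors -/
theorem floor_bridge {r s : ℤ} (hs : 0 < s) :
    Int.fdiv ((Nat.sqrt f : ℤ) + r) s = ⌊(sq f + r) / s⌋ := by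
  rw [Int.fdiv_eq_ediv_of_nonneg _ hs.le]
  have key : ∀ z : ℤ, z ≤ ((Nat.sqrt f : ℤ) + r) / s ↔ z ≤ ⌊(sq f + r) / s⌋ := by
    intro z
    rw [Int.le_ediv_iff_mul_le hs, Int.le_floor,
      le_div_iff₀ (by exact_mod_cast hs : (0:ℝ) < (s:ℝ))]
    constructor
    · intro h
      have h' : ((z*s : ℤ):ℝ) ≤ ((Nat.sqrt f : ℕ):ℝ) + (r:ℝ) := by exact_mod_cast h
      have := na_lt_sq hns
      push_cast at h' ⊢
      linarith
    · intro h
      have h3 : z*s - r < (Nat.sqrt f : ℤ) + 1 := by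
        have hx := sq_lt_na hns
        have h4 : ((z*s - r : ℤ):ℝ) < ((Nat.sqrt f:ℕ):ℝ) + 1 := by push_cast; linarith
        exact_mod_cast h4
      omega
  have h1 := (key (((Nat.sqrt f : ℤ) + r) / s)).1 le_rfl
  have h2 := (key ⌊(sq f + r) / s⌋).2 le_rfl
  omega


/-- The main invariant of the `(r,s)` algorithm. -/
def Good (f k : ℕ) : Prop :=
  0 < ss f k ∧ (ss f k ∣ ((f:ℤ) - rr f k ^ 2)) ∧ 0 ≤ rr f k ∧ rr f k ^ 2 < (f:ℤ) ∧
    ((ss f k : ℝ) < sq f + rr f k)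

theorem good_zero : Good f 0 := by
  refine ⟨one_pos, by simp [rr_zero, ss_zero], le_refl _, by
    have := f_two hns; rw [rr_zero]; simp; omega, ?_⟩
  rw [rr_zero, ss_zero]
  push_cast
  have := sq_one_lt hns
  linarith

theorem good_step {k : ℕ} (h : Good f k) :
    Good f (k+1) ∧ 0 < rr f (k+1) ∧ sq f < rr f (k+1) + ss f (k+1) := by
  obtain ⟨hs, hdvd, hr0, hrf, hα⟩ := h
  set x := sq f with hxdef
  set a : ℤ := (Nat.sqrt f : ℤ) with hadef
  set r := rr f k
  set s := ss f k
  set q := cfA f k with hqdef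
  have hxpos : (0:ℝ) < x := lt_trans one_pos (sq_one_lt hns)
  have hx2 : x^2 = (f:ℝ) := sq_sq f
  have hirr : Irrational x := sq_irr hns
  have hsR : (0:ℝ) < (s:ℝ) := by exact_mod_cast hs
  -- r < x as reals
  have hrx : (r:ℝ) < x := by
    have : ((r:ℤ)^2 : ℝ) < (f:ℝ) := by exact_mod_cast hrf
    push_cast at this
    nlinarith [hxpos, (by exact_mod_cast hr0 : (0:ℝ) ≤ (r:ℝ))]
  -- q is the floor of (x+r)/s
  have hqfloor : q = ⌊(x + r)/s⌋ := by
    rw [hqdef]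
    exact floor_bridge hns hs
  have hq1 : 1 ≤ q := by
    rw [hqfloor]
    rw [Int.le_floor]
    rw [le_div_iff₀ hsR]
    push_cast
    linarith
  have hql : (q:ℝ) * s ≤ x + r := by
    have h := Int.floor_le ((x + (r:ℝ))/(s:ℝ))
    rw [← hqfloor] at h
    exact (le_div_iff₀ hsR).1 h
  have hqu : x + r < ((q:ℝ) + 1) * s := by
    have := Int.lt_floor_add_one ((x + (r:ℝ))/(s:ℝ))
    rw [← hqfloor] at this
    rw [div_lt_iff₀ hsR] at this
    linarith
  -- strictness: x + r ≠ q s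
  have hqstrict : (q:ℝ) * s < x + r := by
    rcases lt_or_eq_of_le hql with h | h
    · exact h
    · exfalso
      exact hirr ⟨((q*s - r : ℤ) : ℚ), by push_cast; linarith⟩
  -- the new pair
  have hr'def : rr f (k+1) = q*s - r := rr_succ f k
  set r' := rr f (k+1) with hr'name
  have hr'x : (r':ℝ) < x := by
    rw [hr'def]; push_cast; linarith
  have hsl : x - (r':ℝ) < s := by
    rw [hr'def]; push_cast; nlinarith
  have hxr' : (s:ℝ) < x + r' := by
    rw [hr'def]; push_cast
    have hqs : (s:ℝ) ≤ (q:ℝ)*s := by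
      have : (1:ℝ) ≤ (q:ℝ) := by exact_mod_cast hq1
      nlinarith
    push_cast at hrx
    linarith
  have hxr'pos : (0:ℝ) < x + r' := lt_trans hsR hxr'
  have hr'2 : r'^2 < (f:ℤ) := by
    have h1 : ((r':ℤ)^2 : ℝ) < x^2 := by
      push_cast
      nlinarith
    rw [hx2] at h1
    exact_mod_cast h1
  have hdvd' : s ∣ ((f:ℤ) - r'^2) := by
    have he : (f:ℤ) - r'^2 = ((f:ℤ) - r^2) + s * ((2*r - q*s)*q) := by rw [hr'def]; ring
    rw [he]
    exact dvd_add hdvd (Dvd.intro _ rfl)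
  have hs'def : ss f (k+1) = ((f:ℤ) - r'^2) / s := by
    rw [ss_succ, Int.fdiv_eq_ediv_of_nonneg _ hs.le]
  set s' := ss f (k+1) with hs'name
  have hprod : s * s' = (f:ℤ) - r'^2 := by
    rw [hs'def]
    exact Int.mul_ediv_cancel' hdvd'
  have hs'pos : 0 < s' := by
    have h1 : 0 < s * s' := by rw [hprod]; linarith
    by_contra hc
    push_neg at hc
    nlinarith
  have hs'R : (0:ℝ) < (s':ℝ) := by exact_mod_cast hs'pos
  have hprodR : (s:ℝ) * s' = (x - r') * (x + r') := by
    have h : ((s:ℝ)) * (s':ℝ) = (f:ℝ) - (r':ℝ)^2 := by exact_mod_cast hprod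
    rw [h, ← hx2]; ring
  have hα' : (s':ℝ) < x + r' := by
    have h := mul_lt_mul_of_pos_right hsl hxr'pos
    rw [← hprodR] at h
    exact lt_of_mul_lt_mul_left h hsR.le
  have hconj' : x - (r':ℝ) < s' := by
    have hxr'' : (0:ℝ) < x - r' := by linarith
    have h := mul_lt_mul_of_pos_left hxr' hxr''
    rw [show (x - (r':ℝ)) * ((x:ℝ) + r') = (x - r')*(x+r') from rfl, ← hprodR] at h
    have h2 : (s:ℝ) * (x - r') < s * s' := by linarith [h]
    exact lt_of_mul_lt_mul_left h2 hsR.le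
  have hr'pos : 0 < r' := by
    have : (0:ℝ) < (r':ℝ) := by linarith
    exact_mod_cast this
  refine ⟨⟨hs'pos, ⟨s, by rw [← hprod]; ring⟩, hr'pos.le, hr'2, hα'⟩, hr'pos, by linarith⟩

theorem good : ∀ k, Good f k := by
  intro k
  induction k with
  | zero => exact good_zero hns
  | succ k ih => exact (good_step hns ih).1

theorem good1 (k : ℕ) : 0 < rr f (k+1) ∧ sq f < rr f (k+1) + ss f (k+1) :=
  (good_step hns (good hns k)).2

theorem ss_pos (k : ℕ) : 0 < ss f k := (good hns k).1
theorem rr_nonneg (k : ℕ) : 0 ≤ rr f k := (good hns k).2.2.1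
theorem rr_sq_lt (k : ℕ) : rr f k ^ 2 < (f:ℤ) := (good hns k).2.2.2.1
theorem alpha_gt (k : ℕ) : (ss f k : ℝ) < sq f + rr f k := (good hns k).2.2.2.2

theorem sProd (k : ℕ) : ss f k * ss f (k+1) = (f:ℤ) - rr f (k+1)^2 := by
  obtain ⟨hs, hdvd, hr0, hrf, hα⟩ := good hns k
  have hdvd' : ss f k ∣ ((f:ℤ) - rr f (k+1)^2) := by
    have he : (f:ℤ) - rr f (k+1)^2 =
        ((f:ℤ) - rr f k^2) + ss f k * ((2*rr f k - cfA f k*ss f k)*cfA f k) := by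
      rw [rr_succ]; ring
    rw [he]
    exact dvd_add hdvd (Dvd.intro _ rfl)
  rw [ss_succ, Int.fdiv_eq_ediv_of_nonneg _ hs.le]
  exact Int.mul_ediv_cancel' hdvd'

theorem cfA_floor (k : ℕ) : cfA f k = ⌊(sq f + rr f k)/(ss f k : ℝ)⌋ :=
  floor_bridge hns (ss_pos hns k)

theorem cfA_ge_one (k : ℕ) : 1 ≤ cfA f k := by
  rw [cfA_floor hns k, Int.le_floor]
  have hsR : (0:ℝ) < (ss f k : ℝ) := by exact_mod_cast ss_pos hns k
  rw [le_div_iff₀ hsR]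
  push_cast
  have := alpha_gt hns k
  linarith

theorem rr_le_na (k : ℕ) : rr f k ≤ (Nat.sqrt f : ℤ) := by
  have h1 := rr_sq_lt hns k
  have h2 := lt_na_sq hns
  have h3 := rr_nonneg hns k
  nlinarith

theorem ss_le (k : ℕ) : (ss f k : ℝ) < 2*(Nat.sqrt f : ℝ) + 1 := by
  have h1 := alpha_gt hns k
  have h2 := sq_lt_na hns
  have h3 : (rr f k : ℝ) ≤ (Nat.sqrt f : ℝ) := by exact_mod_cast rr_le_na hns k
  linarith

/-- E1 and E2: the fundamental relations between convergents and the `(r,s)` pairs. -/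
theorem E12 : ∀ k, cfNum f (k+1) = rr f k * cfDen f (k+1) + ss f k * cfDen f k ∧
    (f:ℤ) * cfDen f (k+1) = rr f k * cfNum f (k+1) + ss f k * cfNum f k := by
  intro k
  induction k with
  | zero => refine ⟨by simp [cfNum, cfDen, rr_zero, ss_zero], by simp [cfNum, cfDen, rr_zero, ss_zero]⟩
  | succ k ih =>
    obtain ⟨h1, h2⟩ := ih
    have hsne : ss f k ≠ 0 := (ss_pos hns k).ne'
    have hprod := sProd hns k
    have her : rr f (k+1) = cfA f k * ss f k - rr f k := rr_succ f k
    have hN : cfNum f (k+2) = cfA f k * cfNum f (k+1) + cfNum f k := by rw [cfNum]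
    have hD : cfDen f (k+2) = cfA f k * cfDen f (k+1) + cfDen f k := by rw [cfDen]
    rw [her] at hprod
    constructor
    · apply mul_left_cancel₀ hsne
      rw [hN, hD, her]
      linear_combination (cfA f k * ss f k - rr f k) * h1 - h2 - cfDen f (k+1) * hprod
    · apply mul_left_cancel₀ hsne
      rw [hN, hD, her]
      linear_combination (-(f:ℤ)) * h1 + (cfA f k * ss f k - rr f k) * h2 -
        cfNum f (k+1) * hprod

theorem detm : ∀ k, cfNum f (k+1) * cfDen f k - cfNum f k * cfDen f (k+1) = (-1)^k := by
  intro k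
  induction k with
  | zero => simp [cfNum, cfDen]
  | succ k ih =>
    have hN : cfNum f (k+2) = cfA f k * cfNum f (k+1) + cfNum f k := by rw [cfNum]
    have hD : cfDen f (k+2) = cfA f k * cfDen f (k+1) + cfDen f k := by rw [cfDen]
    rw [hN, hD, pow_succ]
    linear_combination (-1) * ih

theorem norm_eq (k : ℕ) :
    cfNum f (k+1)^2 - (f:ℤ) * cfDen f (k+1)^2 = (-1)^k * ss f k := by
  obtain ⟨h1, h2⟩ := E12 hns k
  have hd := detm hns k
  linear_combination cfNum f (k+1) * h1 - cfDen f (k+1) * h2 + ss f k * hd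

/-- eₖ = Aₖ − √f·Bₖ -/
noncomputable def ee (f k : ℕ) : ℝ := (cfNum f k : ℝ) - sq f * (cfDen f k : ℝ)

omit hns
theorem ee_zero' : ee f 0 = -sq f := by simp [ee, cfNum, cfDen]
theorem ee_one' : ee f 1 = 1 := by simp [ee, cfNum, cfDen]
include hns

theorem ee_rec (k : ℕ) : (sq f + rr f k) * ee f (k+1) = -(ss f k) * ee f k := by
  obtain ⟨h1, h2⟩ := E12 hns k
  have hE1 : (cfNum f (k+1) : ℝ) = (rr f k : ℝ) * cfDen f (k+1) + (ss f k : ℝ) * cfDen f k := by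
    exact_mod_cast h1
  have hE2 : (f:ℝ) * cfDen f (k+1) = (rr f k : ℝ) * cfNum f (k+1) + (ss f k : ℝ) * cfNum f k := by
    exact_mod_cast h2
  have hx : (sq f)^2 = (f:ℝ) := sq_sq f
  simp only [ee]
  linear_combination (sq f) * hE1 - hE2 - (cfDen f (k+1) : ℝ) * hx

theorem ee_sign : ∀ k, ee f k ≠ 0 ∧ ee f k * ee f (k+1) < 0 := by
  have hx1 := sq_one_lt hns
  intro k
  induction k with
  | zero =>
    constructor
    · rw [ee_zero']; intro h; nlinarith [h]
    · rw [ee_zero', ee_one']; nlinarith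
  | succ k ih =>
    obtain ⟨hne, hprod⟩ := ih
    have hne' : ee f (k+1) ≠ 0 := by
      intro h; rw [h, mul_zero] at hprod; exact lt_irrefl _ hprod
    refine ⟨hne', ?_⟩
    have h := ee_rec hns (k+1)
    have hxr : (0:ℝ) < sq f + rr f (k+1) := by
      have := rr_nonneg hns (k+1)
      have : (0:ℝ) ≤ (rr f (k+1) : ℝ) := by exact_mod_cast this
      linarith
    have hs' : (0:ℝ) < (ss f (k+1) : ℝ) := by exact_mod_cast ss_pos hns (k+1)
    have hkey : (sq f + rr f (k+1)) * (ee f (k+1) * ee f (k+2)) =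
        -(ss f (k+1)) * ee f (k+1)^2 := by
      linear_combination ee f (k+1) * h
    have h2 : (0:ℝ) < ee f (k+1)^2 := by positivity
    nlinarith
  
theorem ee_ne (k : ℕ) : ee f k ≠ 0 := (ee_sign hns k).1

omit hns
theorem cfDen_two : cfDen f 2 = 1 := by simp [cfDen]
include hns

theorem cfDen_nonneg : ∀ k, 0 ≤ cfDen f k := by
  have key : ∀ k, 0 ≤ cfDen f k ∧ 0 ≤ cfDen f (k+1) := by
    intro k
    induction k with
    | zero => exact ⟨by norm_num [cfDen], by norm_num [cfDen]⟩
    | succ k ih =>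
      refine ⟨ih.2, ?_⟩
      have hD : cfDen f (k+2) = cfA f k * cfDen f (k+1) + cfDen f k := by rw [cfDen]
      have := cfA_ge_one hns k
      rw [hD]
      nlinarith [ih.1, ih.2]
  exact fun k => (key k).1

theorem cfDen_pos : ∀ k, 1 ≤ cfDen f (k+2) := by
  intro k
  induction k with
  | zero => rw [cfDen_two]
  | succ k ih =>
    have hD : cfDen f (k+3) = cfA f (k+1) * cfDen f (k+2) + cfDen f (k+1) := by rw [cfDen]
    have h1 := cfA_ge_one hns (k+1)
    have h2 := cfDen_nonneg hns (k+1)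
    rw [hD]
    nlinarith

theorem cfDen_growth : ∀ m : ℤ, ∃ j : ℕ, m < cfDen f (j+2) := by
  have key : ∀ j : ℕ, (j:ℤ) + 1 ≤ cfDen f (2*j+2) := by
    intro j
    induction j with
    | zero => simp [cfDen_two]
    | succ j ih =>
      have hD : cfDen f (2*j+4) = cfA f (2*j+2) * cfDen f (2*j+3) + cfDen f (2*j+2) := by
        rw [show 2*j+4 = (2*j+2)+2 from rfl, cfDen]
      have h1 := cfA_ge_one hns (2*j+2)
      have h2 : 1 ≤ cfDen f (2*j+3) := cfDen_pos hns (2*j+1)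
      have h3 : 0 ≤ cfDen f (2*j+3) := by linarith
      have : (j:ℤ) + 2 ≤ cfDen f (2*j+4) := by rw [hD]; push_cast; nlinarith
      rw [show 2*(j+1)+2 = 2*j+4 from rfl]
      push_cast
      linarith
  intro m
  refine ⟨2 * m.toNat, ?_⟩
  calc m ≤ (m.toNat : ℤ) := Int.self_le_toNat m
  _ < (m.toNat : ℤ) + 1 := by linarith
  _ ≤ _ := key m.toNat

omit hns
/-- helper: same-sign sum of absolute values -/
theorem abs_add_same_sign {a b : ℝ} (h : 0 ≤ a*b) : |a+b| = |a|+|b| := by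
  rcases le_total 0 a with ha|ha <;> rcases le_total 0 b with hb|hb
  · rw [abs_of_nonneg ha, abs_of_nonneg hb, abs_of_nonneg (by linarith)]
  · have h0 : a * b = 0 := le_antisymm (mul_nonpos_iff.2 (Or.inl ⟨ha, hb⟩)) h
    rcases mul_eq_zero.1 h0 with h'|h' <;> subst h' <;> simp
  · have h0 : a * b = 0 := le_antisymm (mul_nonpos_iff.2 (Or.inr ⟨ha, hb⟩)) h
    rcases mul_eq_zero.1 h0 with h'|h' <;> subst h' <;> simp
  · rw [abs_of_nonpos ha, abs_of_nonpos hb, abs_of_nonpos (by linarith)]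
    ring
include hns

/-- the best approximation property of convergents -/
theorem best (k : ℕ) (U V : ℤ) (hV1 : 1 ≤ V) (hV2 : V < cfDen f (k+2)) :
    |ee f (k+1)| ≤ |(V:ℝ) * sq f - (U:ℝ)| := by
  have hd := detm hns (k+1)
  set A1 := cfNum f (k+1) with hA1
  set A2 := cfNum f (k+2) with hA2
  set B1 := cfDen f (k+1) with hB1
  set B2 := cfDen f (k+2) with hB2
  have hsq : ((-1:ℤ))^(k+1)*(-1)^(k+1) = 1 := by rw [← pow_add]; exact Even.neg_one_pow ⟨k+1, rfl⟩
  have hD2 : (A1*B2 - A2*B1)*(A1*B2 - A2*B1) = 1 := by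
    linear_combination (A2*B1 - A1*B2 + (-1:ℤ)^(k+1)) * hd + hsq
  set μ : ℤ := (A1*B2 - A2*B1) * (U*B2 - V*A2) with hμ
  set ν : ℤ := (A1*B2 - A2*B1) * (V*A1 - U*B1) with hν
  have hU : μ*A1 + ν*A2 = U := by rw [hμ, hν]; linear_combination U * hD2
  have hV : μ*B1 + ν*B2 = V := by rw [hμ, hν]; linear_combination V * hD2
  have hUR : (μ:ℝ)*A1 + (ν:ℝ)*A2 = U := by exact_mod_cast hU
  have hVR : (μ:ℝ)*B1 + (ν:ℝ)*B2 = V := by exact_mod_cast hV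
  have hreal : (V:ℝ) * sq f - U = -((μ:ℝ) * ee f (k+1) + (ν:ℝ) * ee f (k+2)) := by
    simp only [ee, ← hA1, ← hA2, ← hB1, ← hB2]
    linear_combination hUR - (sq f) * hVR
  have hB2pos : 1 ≤ B2 := cfDen_pos hns k
  have hB1pos : 0 ≤ B1 := cfDen_nonneg hns (k+1)
  by_cases hν0 : ν = 0
  · rw [hν0] at hV
    have hμ0 : μ ≠ 0 := by
      intro h; rw [h] at hV; simp at hV; omega
    have hμ1 : (1:ℝ) ≤ |(μ:ℝ)| := by
      have : 1 ≤ |μ| := Int.one_le_abs hμ0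
      exact_mod_cast this
    rw [hreal, hν0]
    simp only [Int.cast_zero, zero_mul, add_zero, abs_neg, abs_mul]
    nlinarith [abs_nonneg (ee f (k+1))]
  · by_cases hμ0 : μ = 0
    · exfalso
      rw [hμ0] at hV
      simp at hV
      rcases lt_trichotomy ν 0 with h|h|h
      · nlinarith
      · exact hν0 h
      · nlinarith
    · -- both nonzero: opposite signs
      have hμν : μ * ν < 0 := by
        rcases lt_trichotomy μ 0 with h1|h1|h1
        · rcases lt_trichotomy ν 0 with h2|h2|h2
          · exfalso; nlinarith
          · exact absurd h2 hν0
          · nlinarith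
        · exact absurd h1 hμ0
        · rcases lt_trichotomy ν 0 with h2|h2|h2
          · nlinarith
          · exact absurd h2 hν0
          · exfalso; nlinarith
      have hee := (ee_sign hns (k+1)).2
      have hsame : 0 ≤ ((μ:ℝ) * ee f (k+1)) * ((ν:ℝ) * ee f (k+2)) := by
        have h1 : ((μ:ℝ) * ν) < 0 := by exact_mod_cast hμν
        nlinarith
      rw [hreal, abs_neg, abs_add_same_sign hsame, abs_mul, abs_mul]
      have hμ1 : (1:ℝ) ≤ |(μ:ℝ)| := by
        have : 1 ≤ |μ| := Int.one_le_abs hμ0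
        exact_mod_cast this
      nlinarith [abs_nonneg (ee f (k+1)), abs_nonneg ((ν:ℝ)), abs_nonneg (ee f (k+2)),
        mul_nonneg (abs_nonneg ((ν:ℝ))) (abs_nonneg (ee f (k+2)))]

/-- one step of the cfRS recursion as a function -/
def cfStep (f : ℕ) (pr : ℤ × ℤ) : ℤ × ℤ :=
  let a := Int.fdiv ((Nat.sqrt f : ℤ) + pr.1) pr.2
  let r' := a * pr.2 - pr.1
  (r', Int.fdiv ((f : ℤ) - r' ^ 2) pr.2)

omit hns
theorem cfRS_succ (f k : ℕ) : cfRS f (k+1) = cfStep f (cfRS f k) := rfl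
include hns

/-- the complete quotient αₖ -/
noncomputable def al (f k : ℕ) : ℝ := (sq f + rr f k) / (ss f k)

theorem al_gt_one (k : ℕ) : 1 < al f k := by
  have hsR : (0:ℝ) < (ss f k : ℝ) := by exact_mod_cast ss_pos hns k
  rw [al, lt_div_iff₀ hsR]
  have := alpha_gt hns k
  linarith

theorem al_pos (k : ℕ) : 0 < al f k := lt_trans one_pos (al_gt_one hns k)

theorem al_ub (k : ℕ) : al f k < 2*(Nat.sqrt f : ℝ) + 1 := by
  have hs1 : (1:ℝ) ≤ (ss f k : ℝ) := by exact_mod_cast ss_pos hns k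
  have hr : (rr f k : ℝ) ≤ (Nat.sqrt f : ℝ) := by exact_mod_cast rr_le_na hns k
  have hx := sq_lt_na hns
  have hnum : (0:ℝ) ≤ sq f + rr f k := by
    have := sq_nonneg' f
    have h2 : (0:ℝ) ≤ (rr f k : ℝ) := by exact_mod_cast rr_nonneg hns k
    linarith
  calc al f k ≤ (sq f + rr f k) / 1 := by
        apply div_le_div_of_nonneg_left hnum one_pos hs1  -- may need different lemma
  _ = sq f + rr f k := by ring
  _ < 2*(Nat.sqrt f : ℝ) + 1 := by linarith

theorem al_rec (k : ℕ) : (al f k - cfA f k) * al f (k+1) = 1 := by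
  have hsR : (0:ℝ) < (ss f k : ℝ) := by exact_mod_cast ss_pos hns k
  have hs'R : (0:ℝ) < (ss f (k+1) : ℝ) := by exact_mod_cast ss_pos hns (k+1)
  have herR : (rr f (k+1) : ℝ) = (cfA f k : ℝ) * (ss f k : ℝ) - (rr f k : ℝ) := by
    exact_mod_cast rr_succ f k
  have hprodR : (ss f k : ℝ) * (ss f (k+1) : ℝ) = (f:ℝ) - (rr f (k+1) : ℝ)^2 := by
    exact_mod_cast sProd hns k
  have hx : (sq f)^2 = (f:ℝ) := sq_sq f
  rw [al, al]
  field_simp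
  linear_combination hx - hprodR + (sq f + (rr f (k+1):ℝ)) * herR

theorem al_rec' (k : ℕ) : al f k = cfA f k + 1 / al f (k+1) := by
  have h := al_rec hns k
  have hne : al f (k+1) ≠ 0 := (al_pos hns (k+1)).ne'
  field_simp
  linear_combination h

theorem al_lb (k : ℕ) : 1 + 1/(2*(Nat.sqrt f : ℝ) + 1) ≤ al f k := by
  have hq : (1:ℝ) ≤ (cfA f k : ℝ) := by exact_mod_cast cfA_ge_one hns k
  have h1 := al_ub hns (k+1)
  have h2 := al_pos hns (k+1)
  have h3 : 1 / (2*(Nat.sqrt f : ℝ) + 1) ≤ 1 / al f (k+1) := by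
    apply one_div_le_one_div_of_le h2 h1.le
  rw [al_rec' hns k]
  linarith

theorem al_inj {j m : ℕ} (h : al f j = al f m) : cfRS f j = cfRS f m := by
  have hsj : (0:ℝ) < (ss f j : ℝ) := by exact_mod_cast ss_pos hns j
  have hsm : (0:ℝ) < (ss f m : ℝ) := by exact_mod_cast ss_pos hns m
  have hirr := sq_irr hns
  rw [al, al, div_eq_div_iff hsj.ne' hsm.ne'] at h
  have hss : ss f j = ss f m := by
    by_contra hc
    apply hirr
    refine ⟨((rr f m * ss f j - rr f j * ss f m : ℤ) : ℚ) / ((ss f m - ss f j : ℤ) : ℚ), ?_⟩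
    have hd : ((ss f m - ss f j : ℤ) : ℝ) ≠ 0 := by
      intro h0
      have h1 : (ss f m - ss f j : ℤ) = 0 := by exact_mod_cast h0
      apply hc; omega
    have hcast : ((((rr f m * ss f j - rr f j * ss f m : ℤ) : ℚ) / ((ss f m - ss f j : ℤ) : ℚ) : ℚ) : ℝ)
        = ((rr f m * ss f j - rr f j * ss f m : ℤ) : ℝ) / ((ss f m - ss f j : ℤ) : ℝ) := by
      push_cast; ring
    rw [hcast, div_eq_iff hd]
    push_cast
    push_cast at h
    linear_combination (-1:ℝ) * h
  have hrr : rr f j = rr f m := by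
    have : (rr f j : ℝ) = (rr f m : ℝ) := by
      rw [hss] at h
      have h2 : ((rr f j : ℝ) - rr f m) * (ss f m : ℝ) = 0 := by push_cast at h ⊢; linarith
      rcases mul_eq_zero.1 h2 with h3|h3
      · linarith
      · exact absurd h3 hsm.ne'
    exact_mod_cast this
  have : (cfRS f j).1 = (cfRS f m).1 := hrr
  have h2 : (cfRS f j).2 = (cfRS f m).2 := hss
  exact Prod.ext this h2

/-- a period of the partial quotients is a period of the complete quotients -/
theorem period_rs {p : ℕ} (hp : 0 < p) (hper : ∀ j, 1 ≤ j → cfA f (j + p) = cfA f j) :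
    ∀ j, 1 ≤ j → cfRS f (j + p) = cfRS f j := by
  set a : ℝ := (Nat.sqrt f : ℝ) with hadef
  set c : ℝ := 1 + 1/(2*a + 1) with hcdef
  have ha0 : (0:ℝ) < 2*a+1 := by
    have : (0:ℝ) ≤ a := by rw [hadef]; positivity
    linarith
  have hc1 : 1 < c := by
    rw [hcdef]
    have : 0 < 1/(2*a+1) := by positivity
    linarith
  have hstep : ∀ j, 1 ≤ j → |al f j - al f (j+p)| * c ≤ |al f (j+1) - al f (j+1+p)| := by
    intro j hj
    have h1 := al_rec' hns j
    have h2 := al_rec' hns (j+p)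
    rw [hper j hj] at h2
    have e1 : al f (j+p+1) = al f (j+1+p) := by ring_nf
    rw [e1] at h2
    have hne1 : al f (j+1) ≠ 0 := (al_pos hns (j+1)).ne'
    have hne2 : al f (j+1+p) ≠ 0 := (al_pos hns (j+1+p)).ne'
    have hkey : (al f j - al f (j+p)) * (al f (j+1) * al f (j+1+p)) =
        -(al f (j+1) - al f (j+1+p)) := by
      have hd : al f j - al f (j+p) = 1/al f (j+1) - 1/al f (j+1+p) := by
        rw [h1, h2]; ring
      rw [hd]
      field_simp
      ring
    have habs : |al f j - al f (j+p)| * (al f (j+1) * al f (j+1+p)) =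
        |al f (j+1) - al f (j+1+p)| := by
      rw [← abs_neg (al f (j+1) - al f (j+1+p)), ← hkey, abs_mul,
        abs_of_pos (mul_pos (al_pos hns (j+1)) (al_pos hns (j+1+p)))]
    rw [← habs]
    apply mul_le_mul_of_nonneg_left _ (abs_nonneg _)
    have hl1 := al_lb hns (j+1)
    have hl2 := al_lb hns (j+1+p)
    rw [← hcdef] at hl1 hl2
    nlinarith
  have hiter : ∀ m, |al f 1 - al f (1+p)| * c^m ≤ |al f (1+m) - al f (1+m+p)| := by
    intro m
    induction m with
    | zero => simp
    | succ m ih =>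
      have h := hstep (1+m) (by omega)
      calc |al f 1 - al f (1+p)| * c^(m+1) = (|al f 1 - al f (1+p)| * c^m) * c := by ring
      _ ≤ |al f (1+m) - al f (1+m+p)| * c := by
          apply mul_le_mul_of_nonneg_right ih (by linarith)
      _ ≤ |al f (1+m+1) - al f (1+m+1+p)| := by
          have e1 : (1+m)+1 = 1+m+1 := rfl
          have e2 : (1+m)+1+p = 1+m+1+p := rfl
          rw [← e1, ← e2]
          exact h
  have hbound : ∀ m, |al f 1 - al f (1+p)| * c^m ≤ 2*(2*a+1) := by
    intro m
    refine le_trans (hiter m) ?_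
    have h1 := al_ub hns (1+m)
    have h2 := al_ub hns (1+m+p)
    have h3 := al_pos hns (1+m)
    have h4 := al_pos hns (1+m+p)
    rw [← hadef] at h1 h2
    exact abs_le.2 ⟨by linarith, by linarith⟩
  have hzero : al f 1 = al f (1+p) := by
    by_contra hne
    have hpos : 0 < |al f 1 - al f (1+p)| := abs_pos.2 (sub_ne_zero.2 hne)
    obtain ⟨m, hm⟩ := pow_unbounded_of_one_lt ((2*(2*a+1))/|al f 1 - al f (1+p)|) hc1
    have := hbound m
    rw [div_lt_iff₀ hpos] at hm
    nlinarith [pow_pos (lt_trans one_pos hc1) m]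
  have hbase : cfRS f (1+p) = cfRS f 1 := al_inj hns hzero.symm
  intro j hj
  obtain ⟨i, rfl⟩ : ∃ i, j = 1 + i := ⟨j - 1, by omega⟩
  clear hj
  induction i with
  | zero => exact hbase
  | succ i ih =>
    have e1 : 1 + (i+1) + p = (1 + i + p) + 1 := by ring
    have e2 : 1 + (i+1) = (1 + i) + 1 := by ring
    rw [e1, e2, cfRS_succ, cfRS_succ, ih]

theorem rr_eq_na_of_ss_one {k : ℕ} (hk : 1 ≤ k) (h1 : ss f k = 1) :
    rr f k = (Nat.sqrt f : ℤ) := by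
  have hle := rr_le_na hns k
  obtain ⟨i, rfl⟩ : ∃ i, k = i + 1 := ⟨k - 1, by omega⟩
  obtain ⟨hrpos, hxlt⟩ := good1 hns i
  rw [h1] at hxlt
  have hxR : sq f < (rr f (i+1) : ℝ) + 1 := by push_cast at hxlt ⊢; linarith
  have hfR : (f:ℝ) < ((rr f (i+1) : ℝ) + 1)^2 := by
    have h0 : (0:ℝ) ≤ sq f := sq_nonneg' f
    nlinarith [sq_sq f]
  have hfZ : (f:ℤ) < (rr f (i+1) + 1)^2 := by exact_mod_cast hfR
  have hna := na_sq_lt hns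
  have hnn : (0:ℤ) ≤ (Nat.sqrt f : ℤ) := by positivity
  nlinarith

theorem step_of_ss_one {k : ℕ} (hk : 1 ≤ k) (h1 : ss f k = 1) :
    cfRS f (k+1) = cfRS f 1 := by
  have hr := rr_eq_na_of_ss_one hns hk h1
  have hpair : cfRS f k = ((Nat.sqrt f : ℤ), 1) := Prod.ext hr h1
  rw [cfRS_succ, cfRS_succ, hpair]
  show cfStep f ((Nat.sqrt f : ℤ), 1) = cfStep f (cfRS f 0)
  rw [show cfRS f 0 = ((0:ℤ), (1:ℤ)) from rfl]
  simp only [cfStep, Int.fdiv_one]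
  norm_num

theorem ss_one_period {k : ℕ} (hk : 1 ≤ k) (h1 : ss f k = 1) :
    ∀ j, 1 ≤ j → cfRS f (j + k) = cfRS f j := by
  intro j hj
  obtain ⟨i, rfl⟩ : ∃ i, j = 1 + i := ⟨j - 1, by omega⟩
  clear hj
  induction i with
  | zero =>
    rw [show 1 + 0 + k = k + 1 from by ring]
    exact step_of_ss_one hns hk h1
  | succ i ih =>
    have e1 : 1 + (i+1) + k = (1 + i + k) + 1 := by ring
    have e2 : 1 + (i+1) = (1 + i) + 1 := by ring
    rw [e1, e2, cfRS_succ, cfRS_succ, ih]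

theorem period_iterate {q : ℕ} (hq : ∀ j, 1 ≤ j → cfRS f (j + q) = cfRS f j) :
    ∀ m j, 1 ≤ j → cfRS f (j + m*q) = cfRS f j := by
  intro m
  induction m with
  | zero => intro j hj; simp
  | succ m ih =>
    intro j hj
    have e1 : j + (m+1)*q = (j + m*q) + q := by ring
    rw [e1, hq (j + m*q) (by omega), ih j hj]

theorem dvd_of_ss_one {p k : ℕ} (hper : CFPeriod f p) (hk : 1 ≤ k) (h1 : ss f k = 1) :
    p ∣ k := by
  have hp0 : 0 < p := hper.1.1
  have hprs := period_rs hns hp0 hper.1.2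
  have hkrs := ss_one_period hns hk h1
  have hmlt : k % p < p := Nat.mod_lt _ hp0
  have hmrs : ∀ j, 1 ≤ j → cfRS f (j + k % p) = cfRS f j := by
    intro j hj
    have h2 := period_iterate hns hprs (k / p) (j + k % p) (by omega)
    have h3 : j + k % p + (k/p)*p = j + k := by
      rw [Nat.add_assoc]
      congr 1
      rw [Nat.mod_add_div' k p]
    rw [h3] at h2
    exact h2.symm.trans (hkrs j hj)
  rcases Nat.eq_zero_or_pos (k % p) with h0 | hpos
  · exact Nat.dvd_of_mod_eq_zero h0
  · exfalso
    have hip : CFIsPeriod f (k % p) := ⟨hpos, fun j hj => by simp only [cfA, hmrs j hj]⟩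
    have := hper.2 _ hip
    omega

end
end Stmt18

theorem stmt_18 (f n : ℕ) (hf : 0 < f) (hns : ¬ IsSquare f)
    (hper : CFPeriod f (n + 1)) (hend : cfA f (n + 1) = 2 * cfA f 0)
    (X Y : ℤ) (hX : 0 < X) (hY : 0 < Y)
    (hpell : X ^ 2 - (f : ℤ) * Y ^ 2 = 1 ∨ X ^ 2 - (f : ℤ) * Y ^ 2 = -1) :
    ∃ k : ℕ, 1 ≤ k ∧ X = cfNum f (k * (n + 1) + 1) ∧ Y = cfDen f (k * (n + 1) + 1) := by
  obtain ⟨N, hN1, hNeq⟩ : ∃ N : ℤ, (N = 1 ∨ N = -1) ∧ X ^ 2 - (f:ℤ) * Y ^ 2 = N := by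
    rcases hpell with h | h
    · exact ⟨1, Or.inl rfl, h⟩
    · exact ⟨-1, Or.inr rfl, h⟩
  have hf2 : 2 ≤ f := Stmt18.f_two hns
  set x := Stmt18.sq f with hxdef
  have hx2 : x^2 = (f:ℝ) := Stmt18.sq_sq f
  have hx1 : 1 < x := Stmt18.sq_one_lt hns
  have hNabs : N = 1 ∨ N = -1 := hN1
  -- Y ≤ X
  have hNge : (-1:ℤ) ≤ N := by rcases hNabs with h|h <;> omega
  have hfZ : (2:ℤ) ≤ (f:ℤ) := by exact_mod_cast hf2
  have hYX : Y ≤ X := by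
    by_contra hc
    push_neg at hc
    have h1 : X^2 ≤ (Y-1)^2 := by nlinarith
    nlinarith [hNeq, hNge, h1, hY, mul_nonneg (sub_nonneg.2 hfZ) (sq_nonneg Y)]
  -- |Yx - X| (X + Yx) = 1
  have hXR : (1:ℝ) ≤ (X:ℝ) := by exact_mod_cast hX
  have hYR : (1:ℝ) ≤ (Y:ℝ) := by exact_mod_cast hY
  have hXYpos : (0:ℝ) < (X:ℝ) + Y * x := by nlinarith
  have hNR : ((X:ℝ) - Y*x) * ((X:ℝ) + Y*x) = (N:ℝ) := by
    have h : ((X:ℝ))^2 - (f:ℝ)*(Y:ℝ)^2 = (N:ℝ) := by exact_mod_cast hNeq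
    linear_combination h - (Y:ℝ)^2 * hx2
  have habs1 : |(Y:ℝ)*x - X| * ((X:ℝ) + Y*x) = 1 := by
    have h1 : |((X:ℝ) - Y*x) * ((X:ℝ) + Y*x)| = 1 := by
      rw [hNR]
      rcases hNabs with h | h <;> rw [h] <;> norm_num
    rw [abs_mul, abs_of_pos hXYpos] at h1
    rw [← h1, abs_sub_comm]
  -- |Yx - X| < 1/(2Y)
  have hsmall : |(Y:ℝ)*x - X| < 1/(2*(Y:ℝ)) := by
    have hgt : 2*(Y:ℝ) < (X:ℝ) + Y*x := by
      have hYXR : (Y:ℝ) ≤ (X:ℝ) := by exact_mod_cast hYX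
      nlinarith
    have h2Y : (0:ℝ) < 2*(Y:ℝ) := by linarith
    rw [lt_div_iff₀ h2Y]
    calc |(Y:ℝ)*x - X| * (2*(Y:ℝ)) < |(Y:ℝ)*x - X| * ((X:ℝ) + Y*x) := by
          apply mul_lt_mul_of_pos_left hgt
          rw [abs_pos]
          intro h0
          have : ((X:ℝ) - Y*x) = 0 := by linarith
          rw [this, zero_mul] at hNR
          rcases hNabs with h | h <;> rw [h] at hNR <;> norm_num at hNR
    _ = 1 := habs1
  -- locate Y among the denominators
  have hex : ∃ j:ℕ, (Y:ℤ) < cfDen f (j+2) := Stmt18.cfDen_growth hns Y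
  set J := Nat.find hex with hJdef
  have hJ2 : Y < cfDen f (J+2) := Nat.find_spec hex
  have hJpos : 1 ≤ J := by
    rcases Nat.eq_zero_or_pos J with h0 | h
    · exfalso
      rw [h0] at hJ2
      have h2 : Y < cfDen f 2 := by simpa using hJ2
      rw [Stmt18.cfDen_two] at h2
      omega
    · exact h
  have hJ1 : cfDen f (J+1) ≤ Y := by
    have hmin := Nat.find_min hex (show J - 1 < J by omega)
    push_neg at hmin
    have : J - 1 + 2 = J + 1 := by omega
    rwa [this] at hmin
  -- best approximation
  have hb := Stmt18.best hns J X Y (by omega) hJ2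
  -- the fraction equality
  have hfrac : X * cfDen f (J+1) = cfNum f (J+1) * Y := by
    by_contra hc
    have hne : X * cfDen f (J+1) - cfNum f (J+1) * Y ≠ 0 := fun h => hc (by omega)
    have h1 : (1:ℝ) ≤ |((X * cfDen f (J+1) - cfNum f (J+1) * Y : ℤ) : ℝ)| := by
      have := Int.one_le_abs hne
      calc (1:ℝ) = ((1:ℤ):ℝ) := by norm_num
      _ ≤ ((|X * cfDen f (J+1) - cfNum f (J+1) * Y| : ℤ) : ℝ) := by exact_mod_cast this
      _ = _ := by rw [Int.cast_abs]
    have hdecomp : ((X * cfDen f (J+1) - cfNum f (J+1) * Y : ℤ) : ℝ) =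
        (cfDen f (J+1) : ℝ) * ((X:ℝ) - Y*x) - (Y:ℝ) * Stmt18.ee f (J+1) := by
      simp only [Stmt18.ee]
      push_cast
      ring
    have hB1nn : (0:ℝ) ≤ (cfDen f (J+1) : ℝ) := by
      exact_mod_cast Stmt18.cfDen_nonneg hns (J+1)
    have hB1Y : (cfDen f (J+1) : ℝ) ≤ (Y:ℝ) := by exact_mod_cast hJ1
    have habs2 : |((X * cfDen f (J+1) - cfNum f (J+1) * Y : ℤ) : ℝ)| ≤
        (cfDen f (J+1) : ℝ) * |(Y:ℝ)*x - X| + (Y:ℝ) * |Stmt18.ee f (J+1)| := by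
      rw [hdecomp]
      calc |(cfDen f (J+1) : ℝ) * ((X:ℝ) - Y*x) - (Y:ℝ) * Stmt18.ee f (J+1)|
          ≤ |(cfDen f (J+1) : ℝ) * ((X:ℝ) - Y*x)| + |(Y:ℝ) * Stmt18.ee f (J+1)| :=
            abs_sub _ _
      _ = (cfDen f (J+1) : ℝ) * |(X:ℝ) - Y*x| + (Y:ℝ) * |Stmt18.ee f (J+1)| := by
            rw [abs_mul, abs_mul, abs_of_nonneg hB1nn, abs_of_nonneg (by linarith : (0:ℝ) ≤ (Y:ℝ))]
      _ = (cfDen f (J+1) : ℝ) * |(Y:ℝ)*x - X| + (Y:ℝ) * |Stmt18.ee f (J+1)| := by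
            rw [abs_sub_comm]
    have hlt2 : (cfDen f (J+1) : ℝ) * |(Y:ℝ)*x - X| + (Y:ℝ) * |Stmt18.ee f (J+1)| < 1 := by
      have hY2 : (0:ℝ) < 2*(Y:ℝ) := by linarith
      have he1 : |Stmt18.ee f (J+1)| < 1/(2*(Y:ℝ)) := lt_of_le_of_lt hb hsmall
      have t1 : (cfDen f (J+1) : ℝ) * |(Y:ℝ)*x - X| ≤ (Y:ℝ) * |(Y:ℝ)*x - X| := by
        apply mul_le_mul_of_nonneg_right hB1Y (abs_nonneg _)
      have t2 : (Y:ℝ) * |(Y:ℝ)*x - X| < (Y:ℝ) * (1/(2*(Y:ℝ))) := by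
        apply mul_lt_mul_of_pos_left hsmall (by linarith)
      have t3 : (Y:ℝ) * |Stmt18.ee f (J+1)| < (Y:ℝ) * (1/(2*(Y:ℝ))) := by
        apply mul_lt_mul_of_pos_left he1 (by linarith)
      have t4 : (Y:ℝ) * (1/(2*(Y:ℝ))) = 1/2 := by
        field_simp
      nlinarith
    linarith [le_trans h1 habs2]
  -- coprimality
  have hcopXY : IsCoprime X Y := by
    rcases hNabs with h | h
    · rw [h] at hNeq
      exact ⟨X, -(f:ℤ)*Y, by linear_combination hNeq⟩
    · rw [h] at hNeq
      exact ⟨-X, (f:ℤ)*Y, by linear_combination -hNeq⟩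
  have hcopAB : IsCoprime (cfNum f (J+1)) (cfDen f (J+1)) := by
    have hd := Stmt18.detm hns J
    have hsq : ((-1:ℤ))^J*(-1)^J = 1 := by rw [← pow_add]; exact Even.neg_one_pow ⟨J, rfl⟩
    exact ⟨(-1)^J * cfDen f J, -((-1)^J) * cfNum f J, by linear_combination ((-1:ℤ))^J * hd + hsq⟩
  -- Y = B, X = A
  have hYB : Y = cfDen f (J+1) := by
    have hYdvd : Y ∣ cfDen f (J+1) := by
      apply (hcopXY.symm).dvd_of_dvd_mul_left
      exact ⟨cfNum f (J+1), by linarith [hfrac]⟩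
    have hBdvd : cfDen f (J+1) ∣ Y := by
      apply (hcopAB.symm).dvd_of_dvd_mul_left
      exact ⟨X, by linarith [hfrac]⟩
    exact Int.dvd_antisymm hY.le (Stmt18.cfDen_nonneg hns (J+1)) hYdvd hBdvd
  have hBne : cfDen f (J+1) ≠ 0 := by rw [← hYB]; omega
  have hXA : X = cfNum f (J+1) := by
    apply mul_right_cancel₀ hBne
    rw [hfrac, hYB]
  -- ss f J = 1
  have hnorm := Stmt18.norm_eq hns J
  rw [← hXA, ← hYB] at hnorm
  rw [hNeq] at hnorm
  have hsspos := Stmt18.ss_pos hns J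
  have hss1 : Stmt18.ss f J = 1 := by
    rcases Nat.even_or_odd J with he | ho
    · rw [he.neg_one_pow] at hnorm
      rcases hNabs with h | h <;> omega
    · rw [ho.neg_one_pow] at hnorm
      rcases hNabs with h | h <;> omega
  -- divisibility by the period
  have hdvd : (n+1) ∣ J := Stmt18.dvd_of_ss_one hns hper hJpos hss1
  obtain ⟨m, hm⟩ := hdvd
  have hm1 : 1 ≤ m := by
    rcases Nat.eq_zero_or_pos m with h0 | h
    · rw [h0, Nat.mul_zero] at hm; omega
    · exact h
  refine ⟨m, hm1, ?_, ?_⟩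
  · rw [hXA]; congr 1; rw [hm]; ring
  · rw [hYB]; congr 1; rw [hm]; ring
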